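/- Let γ > 0, G₀ > 0, C > 0, r₀ > 0, and define P(x,t) = max(C − (|x| − r₀)²/(4t), 0) for x ∈ ℝ^N, t > 0. Set T* = min{1/(4G₀), r₀²/(16N²C)}. Then: (i) for every t ∈ (0,T*] and every x with r₀ − 2√(Ct) < |x| < r₀, P is C² in a neighborhood of (x,t) and satisfies the supersolution inequality ∂_t P(x,t) ≥ γ P(x,t) ΔP(x,t) + |∇P(x,t)|² + γ P(x,t) G₀ (indeed ∂_t P = |∇P|² and ΔP(x,t) + G₀ ≤ 0 at such points); (ii) P(x,t) = 0 whenever 0 < t ≤ T* and |x| ≤ r₀(2N−1)/(2N). -/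

import Mathlib

open MeasureTheory Metric Set Filter Real
open scoped ENNReal RealInnerProductSpace Topology

set_option maxHeartbeats 1000000

noncomputable section

/-- Euclidean space `ℝ^N`. -/
abbrev Euc (N : ℕ) : Type := EuclideanSpace ℝ (Fin N)

/-- The spatial Laplacian of a function on `ℝ^N`. -/
def lap {N : ℕ} (φ : Euc N → ℝ) (x : Euc N) : ℝ :=
  ∑ i : Fin N, fderiv ℝ (fderiv ℝ φ) x (EuclideanSpace.single i 1) (EuclideanSpace.single i 1)

/-- Smooth, compactly supported test functions on `ℝ^N`. -/
def IsTestFun {N : ℕ} (φ : Euc N → ℝ) : Prop :=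
  ContDiff ℝ (⊤ : ℕ∞) φ ∧ HasCompactSupport φ

/-- Smooth test functions compactly supported in `Q = ℝ^N × (0,∞)`. -/
def IsTestFunQ {N : ℕ} (φ : Euc N × ℝ → ℝ) : Prop :=
  ContDiff ℝ (⊤ : ℕ∞) φ ∧ HasCompactSupport φ ∧ tsupport φ ⊆ {q : Euc N × ℝ | 0 < q.2}

/-- The parabolic domain `Q = ℝ^N × (0,∞)`. -/
def Qset (N : ℕ) : Set (Euc N × ℝ) := Set.univ ×ˢ Set.Ioi (0 : ℝ)

/-- The barrier `P(x,t) = (C - (|x|-r₀)²/(4t))₊`. -/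
def Pfun {N : ℕ} (C r₀ : ℝ) (x : Euc N) (t : ℝ) : ℝ :=
  max (C - (‖x‖ - r₀) ^ 2 / (4 * t)) 0

namespace Barrier

variable {N : ℕ}

lemma hasFDerivAt_norm' (x : Euc N) (hx : x ≠ 0) :
    HasFDerivAt (fun y : Euc N => ‖y‖) (‖x‖⁻¹ • (innerSL ℝ x : Euc N →L[ℝ] ℝ)) x := by
  have h0 : ‖x‖ ≠ 0 := norm_ne_zero_iff.mpr hx
  have h1 : HasFDerivAt (fun y : Euc N => ‖y‖ ^ 2) (2 • (innerSL ℝ x : Euc N →L[ℝ] ℝ)) x :=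
    (hasStrictFDerivAt_norm_sq x).hasFDerivAt
  have h2 : HasDerivAt Real.sqrt (1 / (2 * Real.sqrt (‖x‖ ^ 2))) (‖x‖ ^ 2) :=
    Real.hasDerivAt_sqrt (pow_ne_zero 2 h0)
  have h3 := h2.comp_hasFDerivAt x h1
  have h4 : (fun y : Euc N => ‖y‖) =ᶠ[𝓝 x] (Real.sqrt ∘ fun y : Euc N => ‖y‖ ^ 2) :=
    Filter.Eventually.of_forall fun y => (Real.sqrt_sq (norm_nonneg y)).symm
  have h5 := h3.congr_of_eventuallyEq h4
  rw [Real.sqrt_sq (norm_nonneg x)] at h5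
  refine h5.congr_fderiv ?_
  ext v
  simp only [ContinuousLinearMap.smul_apply, two_smul, ContinuousLinearMap.add_apply,
    smul_eq_mul]
  ring

lemma hasFDerivAt_radial {g : ℝ → ℝ} {g' : ℝ} (x : Euc N) (hx : x ≠ 0)
    (hg : HasDerivAt g g' ‖x‖) :
    HasFDerivAt (fun y : Euc N => g ‖y‖) ((g' * ‖x‖⁻¹) • (innerSL ℝ x : Euc N →L[ℝ] ℝ)) x := by
  have h := hg.comp_hasFDerivAt x (hasFDerivAt_norm' x hx)
  rw [smul_smul] at h
  exact h

lemma hasFDerivAt_F (C r₀ t : ℝ) (ht : t ≠ 0) (x : Euc N) (hx : x ≠ 0) :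
    HasFDerivAt (fun y : Euc N => C - (‖y‖ - r₀) ^ 2 / (4 * t))
      ((-(‖x‖ - r₀) / (2 * t) * ‖x‖⁻¹) • (innerSL ℝ x : Euc N →L[ℝ] ℝ)) x := by
  have hg : HasDerivAt (fun s : ℝ => C - (s - r₀) ^ 2 / (4 * t)) (-(‖x‖ - r₀) / (2 * t)) ‖x‖ := by
    have h1 : HasDerivAt (fun s : ℝ => (s - r₀) ^ 2) (2 * (‖x‖ - r₀)) ‖x‖ := by
      exact (((hasDerivAt_id ‖x‖).sub_const r₀).pow 2).congr_deriv (by simp)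
    have h2 := (h1.div_const (4 * t)).const_sub C
    refine h2.congr_deriv ?_
    field_simp
    ring
  exact hasFDerivAt_radial x hx hg

lemma hasFDerivAt_c (r₀ t : ℝ) (ht : t ≠ 0) (x : Euc N) (hx : x ≠ 0) :
    HasFDerivAt (fun y : Euc N => -(‖y‖ - r₀) / (2 * t) * ‖y‖⁻¹)
      ((-(r₀ / (2 * t)) * (‖x‖ ^ 2)⁻¹ * ‖x‖⁻¹) • (innerSL ℝ x : Euc N →L[ℝ] ℝ)) x := by
  have h0 : ‖x‖ ≠ 0 := norm_ne_zero_iff.mpr hx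
  have hg : HasDerivAt (fun s : ℝ => -(s - r₀) / (2 * t) * s⁻¹)
      (-(r₀ / (2 * t)) * (‖x‖ ^ 2)⁻¹) ‖x‖ := by
    have hA : HasDerivAt (fun s : ℝ => -(s - r₀) / (2 * t)) (-(1 / (2 * t))) ‖x‖ := by
      have h := (((hasDerivAt_id ‖x‖).sub_const r₀).neg).div_const (2 * t)
      refine h.congr_deriv ?_
      ring
    have hB : HasDerivAt (fun s : ℝ => s⁻¹) (-(‖x‖ ^ 2)⁻¹) ‖x‖ := by
      simpa using hasDerivAt_inv h0
    have := hA.mul hB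
    refine this.congr_deriv ?_
    field_simp
    ring
  exact hasFDerivAt_radial x hx hg

/-- `innerSL` as a plain `ℝ`-linear continuous map. -/
def inSL (N : ℕ) : Euc N →L[ℝ] Euc N →L[ℝ] ℝ := innerSL ℝ

end Barrier

/-- **Lemma 7.4.** The function `P(x,t) = (C - (|x|-r₀)²/(4t))₊` is a supersolution of
`∂ₜ p = γ p Δp + |∇p|² + γ p G₀` on the annulus `r₀ - 2√(Ct) < |x| < r₀` up to time
`T* = min(1/(4G₀), r₀²/(16N²C))` (indeed there `∂ₜP = |∇P|²` and `ΔP + G₀ ≤ 0`), and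
`P(·,t)` vanishes on the ball of radius `r₀(2N-1)/(2N)` for `0 < t ≤ T*`. -/
theorem barrier_supersolution {N : ℕ} (hN : 1 ≤ N) (γ G0 C r₀ : ℝ)
    (hγ : 0 < γ) (hG0 : 0 < G0) (hC : 0 < C) (hr : 0 < r₀) :
    (∀ t : ℝ, 0 < t → t ≤ min (1 / (4 * G0)) (r₀ ^ 2 / (16 * (N:ℝ) ^ 2 * C)) →
      ∀ x : Euc N, r₀ - 2 * Real.sqrt (C * t) < ‖x‖ → ‖x‖ < r₀ →
        ContDiffAt ℝ 2 (fun q : Euc N × ℝ => Pfun C r₀ q.1 q.2) (x, t) ∧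
        deriv (fun s => Pfun C r₀ x s) t = ‖gradient (fun y => Pfun C r₀ y t) x‖ ^ 2 ∧
        lap (fun y => Pfun C r₀ y t) x + G0 ≤ 0 ∧
        γ * Pfun C r₀ x t * lap (fun y => Pfun C r₀ y t) x
            + ‖gradient (fun y => Pfun C r₀ y t) x‖ ^ 2 + γ * Pfun C r₀ x t * G0
          ≤ deriv (fun s => Pfun C r₀ x s) t) ∧
    (∀ t : ℝ, 0 < t → t ≤ min (1 / (4 * G0)) (r₀ ^ 2 / (16 * (N:ℝ) ^ 2 * C)) →
      ∀ x : Euc N, ‖x‖ ≤ r₀ * (2 * (N:ℝ) - 1) / (2 * (N:ℝ)) → Pfun C r₀ x t = 0) := by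
  have hN1 : (1 : ℝ) ≤ (N : ℝ) := by exact_mod_cast hN
  have hNpos : (0 : ℝ) < (N : ℝ) := by linarith
  constructor
  · intro t ht htT x hx1 hx2
    have htG : t ≤ 1 / (4 * G0) := le_trans htT (min_le_left _ _)
    have htC : t ≤ r₀ ^ 2 / (16 * (N:ℝ) ^ 2 * C) := le_trans htT (min_le_right _ _)
    have ht' : t ≠ 0 := ht.ne'
    -- √(Ct) ≤ r₀/(4N)
    have hCt : Real.sqrt (C * t) ^ 2 = C * t := Real.sq_sqrt (by positivity)
    have hsq : Real.sqrt (C * t) ≤ r₀ / (4 * (N:ℝ)) := by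
      rw [show r₀ / (4 * (N:ℝ)) = Real.sqrt ((r₀ / (4 * (N:ℝ))) ^ 2) from
        (Real.sqrt_sq (by positivity)).symm]
      apply Real.sqrt_le_sqrt
      have h2 := mul_le_mul_of_nonneg_left htC hC.le
      have h3 : C * (r₀ ^ 2 / (16 * (N:ℝ) ^ 2 * C)) = r₀ ^ 2 / (16 * (N:ℝ) ^ 2) := by
        field_simp
      have h4 : (r₀ / (4 * (N:ℝ))) ^ 2 = r₀ ^ 2 / (16 * (N:ℝ) ^ 2) := by
        field_simp; ring
      nlinarith [h2]
    have hr2N : 2 * Real.sqrt (C * t) ≤ r₀ / (2 * (N:ℝ)) := by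
      have : 2 * (r₀ / (4 * (N:ℝ))) = r₀ / (2 * (N:ℝ)) := by field_simp; ring
      linarith
    have hrpos : 0 < ‖x‖ := by
      have h5 : r₀ / (2 * (N:ℝ)) < r₀ := div_lt_self hr (by linarith)
      linarith
    have hx0 : x ≠ 0 := by
      intro h; rw [h] at hrpos; simp at hrpos
    have hnorm0 : ‖x‖ ≠ 0 := hrpos.ne'
    -- positivity of the smooth expression at (x,t)
    have h4Ct : (‖x‖ - r₀) ^ 2 < 4 * (C * t) := by nlinarith [Real.sqrt_nonneg (C * t)]
    have hpos : 0 < C - (‖x‖ - r₀) ^ 2 / (4 * t) := by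
      rw [sub_pos, div_lt_iff₀ (by positivity)]
      nlinarith
    -- the smooth two-variable function
    set Fq : Euc N × ℝ → ℝ := fun q => C - (‖q.1‖ - r₀) ^ 2 / (4 * q.2) with hFqdef
    have hFqsmooth : ContDiffAt ℝ 2 Fq (x, t) := by
      have hn : ContDiffAt ℝ 2 (fun q : Euc N × ℝ => ‖q.1‖) (x, t) :=
        (contDiffAt_norm ℝ hx0).comp (x, t) contDiff_fst.contDiffAt
      have hnum : ContDiffAt ℝ 2 (fun q : Euc N × ℝ => (‖q.1‖ - r₀) ^ 2) (x, t) :=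
        (hn.sub contDiffAt_const).pow 2
      have hden : ContDiffAt ℝ 2 (fun q : Euc N × ℝ => 4 * q.2) (x, t) :=
        contDiffAt_const.mul contDiff_snd.contDiffAt
      exact contDiffAt_const.sub (hnum.div hden (by simpa using (by positivity : (0:ℝ) < 4 * t).ne'))
    have hFqpos : 0 < Fq (x, t) := hpos
    have hevq : (fun q : Euc N × ℝ => Pfun C r₀ q.1 q.2) =ᶠ[𝓝 (x, t)] Fq := by
      have h := hFqsmooth.continuousAt.eventually_mem (isOpen_Ioi.mem_nhds hFqpos)
      filter_upwards [h] with q hq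
      exact max_eq_left (le_of_lt hq)
    refine ⟨hFqsmooth.congr_of_eventuallyEq hevq, ?_⟩
    -- eventual equalities in space and time
    have hposq : ∀ᶠ q : Euc N × ℝ in 𝓝 (x, t), 0 < C - (‖q.1‖ - r₀) ^ 2 / (4 * q.2) :=
      hFqsmooth.continuousAt.eventually_mem (isOpen_Ioi.mem_nhds hFqpos)
    have hevs : (fun y : Euc N => Pfun C r₀ y t) =ᶠ[𝓝 x]
        (fun y : Euc N => C - (‖y‖ - r₀) ^ 2 / (4 * t)) := by
      have h := ((continuous_id.prodMk continuous_const).tendsto x).eventually hposq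
      filter_upwards [h] with y hy
      exact max_eq_left hy.le
    have hevt : (fun s : ℝ => Pfun C r₀ x s) =ᶠ[𝓝 t]
        (fun s : ℝ => C - (‖x‖ - r₀) ^ 2 / (4 * s)) := by
      have h := ((continuous_const.prodMk continuous_id).tendsto t).eventually hposq
      filter_upwards [h] with s hs
      exact max_eq_left hs.le
    -- time derivative
    have ha : HasDerivAt (fun s : ℝ => C - (‖x‖ - r₀) ^ 2 / (4 * s))
        ((‖x‖ - r₀) ^ 2 / (4 * t ^ 2)) t := by
      have hfun : (fun s : ℝ => C - (‖x‖ - r₀) ^ 2 / (4 * s))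
          = fun s : ℝ => C - (‖x‖ - r₀) ^ 2 / 4 * s⁻¹ := by
        funext s; ring
      rw [hfun]
      have h1 : HasDerivAt (fun s : ℝ => s⁻¹) (-(t ^ 2)⁻¹) t := by
        simpa using hasDerivAt_inv ht'
      have h2 := (h1.const_mul ((‖x‖ - r₀) ^ 2 / 4)).const_sub C
      refine h2.congr_deriv ?_
      field_simp
    have hderiv_t : deriv (fun s => Pfun C r₀ x s) t = (‖x‖ - r₀) ^ 2 / (4 * t ^ 2) := by
      rw [hevt.deriv_eq]; exact ha.deriv
    -- gradient
    have hF := Barrier.hasFDerivAt_F C r₀ t ht' x hx0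
    have hP : HasFDerivAt (fun y : Euc N => Pfun C r₀ y t)
        ((-(‖x‖ - r₀) / (2 * t) * ‖x‖⁻¹) • (innerSL ℝ x : Euc N →L[ℝ] ℝ)) x :=
      hF.congr_of_eventuallyEq hevs
    have hgrad : HasGradientAt (fun y : Euc N => Pfun C r₀ y t)
        ((-(‖x‖ - r₀) / (2 * t) * ‖x‖⁻¹) • x) x := by
      rw [hasGradientAt_iff_hasFDerivAt]
      refine hP.congr_fderiv ?_
      ext v
      simp [InnerProductSpace.toDual_apply_apply, real_inner_smul_left]
    have hgradval : gradient (fun y : Euc N => Pfun C r₀ y t) x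
        = (-(‖x‖ - r₀) / (2 * t) * ‖x‖⁻¹) • x := hgrad.gradient
    have hgradsq : ‖gradient (fun y : Euc N => Pfun C r₀ y t) x‖ ^ 2
        = (‖x‖ - r₀) ^ 2 / (4 * t ^ 2) := by
      rw [hgradval, norm_smul, Real.norm_eq_abs, mul_pow, sq_abs]
      field_simp
      ring
    have hderiv_eq : deriv (fun s => Pfun C r₀ x s) t
        = ‖gradient (fun y : Euc N => Pfun C r₀ y t) x‖ ^ 2 := by
      rw [hderiv_t, hgradsq]
    refine ⟨hderiv_eq, ?_⟩
    -- Laplacian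
    set c : Euc N → ℝ := fun y => -(‖y‖ - r₀) / (2 * t) * ‖y‖⁻¹ with hcdef
    set k : ℝ := -(r₀ / (2 * t)) * (‖x‖ ^ 2)⁻¹ * ‖x‖⁻¹ with hkdef
    set G : Euc N → Euc N →L[ℝ] ℝ := fun y => c y • (innerSL ℝ y : Euc N →L[ℝ] ℝ) with hGdef
    have hGev : fderiv ℝ (fun y : Euc N => Pfun C r₀ y t) =ᶠ[𝓝 x] G := by
      filter_upwards [hevs.eventuallyEq_nhds, eventually_ne_nhds hx0] with y hy hyne
      exact hy.fderiv_eq.trans (Barrier.hasFDerivAt_F C r₀ t ht' y hyne).fderiv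
    have hc := Barrier.hasFDerivAt_c r₀ t ht' x hx0
    have hι : HasFDerivAt (fun y : Euc N => (innerSL ℝ y : Euc N →L[ℝ] ℝ))
        (Barrier.inSL N) x :=
      (Barrier.inSL N).hasFDerivAt
    have hG : HasFDerivAt G
        (c x • (Barrier.inSL N)
          + ((-(r₀ / (2 * t)) * (‖x‖ ^ 2)⁻¹ * ‖x‖⁻¹) •
              (innerSL ℝ x : Euc N →L[ℝ] ℝ)).smulRight (innerSL ℝ x : Euc N →L[ℝ] ℝ)) x :=
      hc.smul hι
    have hlapeq : fderiv ℝ (fderiv ℝ (fun y : Euc N => Pfun C r₀ y t)) x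
        = c x • (Barrier.inSL N)
          + ((-(r₀ / (2 * t)) * (‖x‖ ^ 2)⁻¹ * ‖x‖⁻¹) •
              (innerSL ℝ x : Euc N →L[ℝ] ℝ)).smulRight (innerSL ℝ x : Euc N →L[ℝ] ℝ) := by
      rw [hGev.fderiv_eq]; exact hG.fderiv
    have hsum : ∑ i : Fin N, x i * x i = ‖x‖ ^ 2 := by
      rw [EuclideanSpace.norm_eq, Real.sq_sqrt (by positivity)]
      simp [sq]
    have hlapval : lap (fun y : Euc N => Pfun C r₀ y t) x = (N:ℝ) * c x + k * ‖x‖ ^ 2 := by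
      unfold lap
      rw [hlapeq]
      simp only [ContinuousLinearMap.add_apply, ContinuousLinearMap.coe_smul', Pi.smul_apply,
        ContinuousLinearMap.smulRight_apply, ContinuousLinearMap.smul_apply, innerSL_apply_apply,
        smul_eq_mul]
      have hone : ∀ i : Fin N,
          (⟪EuclideanSpace.single i (1:ℝ), EuclideanSpace.single i (1:ℝ)⟫ : ℝ) = 1 := by
        intro i
        rw [EuclideanSpace.inner_single_right]
        simp
      have hxi : ∀ i : Fin N, (⟪x, EuclideanSpace.single i (1:ℝ)⟫ : ℝ) = x i := by
        intro i
        rw [EuclideanSpace.inner_single_right]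
        simp
      calc (∑ i : Fin N, (c x * ⟪EuclideanSpace.single i (1:ℝ), EuclideanSpace.single i (1:ℝ)⟫
              + -(r₀ / (2 * t)) * (‖x‖ ^ 2)⁻¹ * ‖x‖⁻¹ * ⟪x, EuclideanSpace.single i (1:ℝ)⟫
                * ⟪x, EuclideanSpace.single i (1:ℝ)⟫))
          = ∑ i : Fin N, (c x * 1 + k * (x i * x i)) := by
            apply Finset.sum_congr rfl
            intro i _
            rw [hone i, hxi i, hkdef]
            ring
        _ = (N:ℝ) * c x + k * ∑ i : Fin N, x i * x i := by
            rw [Finset.sum_add_distrib, ← Finset.mul_sum]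
            simp [Finset.sum_const, mul_comm, Finset.sum_mul]
        _ = (N:ℝ) * c x + k * ‖x‖ ^ 2 := by rw [hsum]
    have hlapval' : lap (fun y : Euc N => Pfun C r₀ y t) x
        = ((N:ℝ) * (r₀ - ‖x‖) - r₀) / (2 * t * ‖x‖) := by
      rw [hlapval, hcdef, hkdef]
      field_simp
      ring
    -- lap + G0 ≤ 0
    have hkey : (N:ℝ) * (r₀ - ‖x‖) < r₀ - ‖x‖ / 2 := by
      have h2 := mul_le_mul_of_nonneg_left hr2N (le_of_lt hNpos)
      have h3 : (N:ℝ) * (r₀ / (2 * (N:ℝ))) = r₀ / 2 := by field_simp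
      nlinarith [mul_pos hNpos (by linarith : (0:ℝ) < 2 * Real.sqrt (C * t) - (r₀ - ‖x‖))]
    have hlap_le : lap (fun y : Euc N => Pfun C r₀ y t) x ≤ -(1 / (4 * t)) := by
      rw [hlapval', div_le_iff₀ (by positivity)]
      have h6 : -(1 / (4 * t)) * (2 * t * ‖x‖) = -(‖x‖ / 2) := by field_simp; ring
      rw [h6]
      linarith
    have hG0le : G0 ≤ 1 / (4 * t) := by
      rw [le_div_iff₀ (by positivity)]
      have h7 := mul_le_mul_of_nonneg_left htG (by positivity : (0:ℝ) ≤ 4 * G0)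
      have h8 : 4 * G0 * (1 / (4 * G0)) = 1 := by field_simp
      nlinarith
    have hlapG : lap (fun y : Euc N => Pfun C r₀ y t) x + G0 ≤ 0 := by linarith
    refine ⟨hlapG, ?_⟩
    have hPnn : 0 ≤ Pfun C r₀ x t := le_max_right _ _
    have key : ∀ A B P : ℝ, 0 ≤ P → A + G0 ≤ 0 →
        γ * P * A + B + γ * P * G0 ≤ B := by
      intro A B P hP hA
      nlinarith [mul_nonpos_of_nonneg_of_nonpos (mul_nonneg hγ.le hP) hA]
    rw [hderiv_eq]
    exact key _ _ _ hPnn hlapG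
  · intro t ht htT x hx
    have htC : t ≤ r₀ ^ 2 / (16 * (N:ℝ) ^ 2 * C) := le_trans htT (min_le_right _ _)
    have hCt' : C * t ≤ r₀ ^ 2 / (16 * (N:ℝ) ^ 2) := by
      have h2 := mul_le_mul_of_nonneg_left htC hC.le
      have h3 : C * (r₀ ^ 2 / (16 * (N:ℝ) ^ 2 * C)) = r₀ ^ 2 / (16 * (N:ℝ) ^ 2) := by
        field_simp
      linarith [h3 ▸ h2]
    have h9 : r₀ * (2 * (N:ℝ) - 1) / (2 * (N:ℝ)) = r₀ - r₀ / (2 * (N:ℝ)) := by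
      field_simp
    have h1 : r₀ / (2 * (N:ℝ)) ≤ r₀ - ‖x‖ := by
      rw [h9] at hx; linarith
    have h2 : (r₀ / (2 * (N:ℝ))) ^ 2 ≤ (r₀ - ‖x‖) ^ 2 :=
      pow_le_pow_left₀ (by positivity) h1 2
    have h3 : (r₀ / (2 * (N:ℝ))) ^ 2 = r₀ ^ 2 / (4 * (N:ℝ) ^ 2) := by
      field_simp; ring
    unfold Pfun
    apply max_eq_right
    have h4 : r₀ ^ 2 / (4 * (N:ℝ) ^ 2) = 4 * (r₀ ^ 2 / (16 * (N:ℝ) ^ 2)) := by ring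
    have h5 : (‖x‖ - r₀) ^ 2 = (r₀ - ‖x‖) ^ 2 := by ring
    rw [sub_nonpos, le_div_iff₀ (by positivity)]
    linarith [h2, h3, h4, h5, hCt']
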